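/- arXiv:1105.3770 — 2 statements merged into one kernel-verified Lean document; each statement's English description precedes it below -/
import Mathlib

section
/- Let Y_1,...,Y_n be nonnegative independent random variables with finite second moments, and let S be their sum. Then for every t > 0, the probability that E[S] - S ≥ t is at most exp(-t^2 / (2 · sum_{i=1}^n E[Y_i^2])). -/
open MeasureTheory ProbabilityTheory

lemma exp_neg_le_quad {x : ℝ} (hx : 0 ≤ x) :
    Real.exp (-x) ≤ 1 - x + x ^ 2 / 2 := by
  have hmono : Monotone (fun x : ℝ => 1 - x + x ^ 2 / 2 - Real.exp (-x)) := by
    apply monotone_of_deriv_nonneg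
    · fun_prop
    · intro y
      have hd : HasDerivAt (fun x : ℝ => 1 - x + x ^ 2 / 2 - Real.exp (-x))
          (-1 + y + Real.exp (-y)) y := by
        have h1 : HasDerivAt (fun x : ℝ => 1 - x + x ^ 2 / 2) (-1 + y) y := by
          have := ((hasDerivAt_id y).const_sub 1).add (((hasDerivAt_id y).pow 2).div_const 2)
          refine this.congr_deriv ?_
          simp
        have h2 : HasDerivAt (fun x : ℝ => Real.exp (-x)) (-Real.exp (-y)) y := by
          have := (Real.hasDerivAt_exp (-y)).comp y ((hasDerivAt_id y).neg)
          refine this.congr_deriv ?_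
          simp
        have := h1.sub h2
        refine this.congr_deriv ?_
        ring
      rw [hd.deriv]
      nlinarith [Real.add_one_le_exp (-y)]
  have h := hmono hx
  norm_num [Real.exp_zero] at h
  linarith

/-- **Maurer's inequality.** If `Y₁,…,Yₙ` are nonnegative independent
random variables with finite second moments and `S = ∑ Yᵢ`, then for every `t > 0`,
`P[E[S] - S ≥ t] ≤ exp(-t² / (2 ∑ E[Yᵢ²]))`. -/
theorem maurer_inequality {Ω : Type*} [MeasureSpace Ω]
    [IsProbabilityMeasure (ℙ : Measure Ω)] {n : ℕ} (Y : Fin n → Ω → ℝ)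
    (hnn : ∀ i ω, 0 ≤ Y i ω)
    (hind : iIndepFun Y ℙ)
    (hmeas : ∀ i, Measurable (Y i))
    (hL2 : ∀ i, MemLp (Y i) 2 ℙ)
    {t : ℝ} (ht : 0 < t) :
    (ℙ {ω | t ≤ (∑ i, ∫ ω', Y i ω' ∂ℙ) - ∑ i, Y i ω}).toReal ≤
      Real.exp (-t ^ 2 / (2 * ∑ i, ∫ ω', Y i ω' ^ 2 ∂ℙ)) := by
  set μi : Fin n → ℝ := fun i => ∫ ω', Y i ω' ∂ℙ with hμidef
  set σi : Fin n → ℝ := fun i => ∫ ω', Y i ω' ^ 2 ∂ℙ with hσidef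
  have hσnn : ∀ i, 0 ≤ σi i := fun i => integral_nonneg fun ω => sq_nonneg _
  have hVnn : 0 ≤ ∑ i, σi i := Finset.sum_nonneg fun i _ => hσnn i
  rcases eq_or_lt_of_le hVnn with hV0 | hVpos
  · rw [← hV0, mul_zero, div_zero, Real.exp_zero]
    have h1 : ℙ {ω | t ≤ (∑ i, μi i) - ∑ i, Y i ω} ≤ 1 := prob_le_one
    calc (ℙ {ω | t ≤ (∑ i, μi i) - ∑ i, Y i ω}).toReal
        ≤ (1:ENNReal).toReal := ENNReal.toReal_mono ENNReal.one_ne_top h1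
      _ = 1 := ENNReal.toReal_one
  set V : ℝ := ∑ i, σi i
  set c : ℝ := t / V with hc
  have hcpos : 0 < c := div_pos ht hVpos
  set M : ℝ := ∑ i, μi i with hM
  set X : Ω → ℝ := fun ω => M - ∑ i, Y i ω with hX
  have hS_nn : ∀ ω, 0 ≤ ∑ i, Y i ω := fun ω => Finset.sum_nonneg fun i _ => hnn i ω
  have hSmeas : Measurable fun ω => ∑ i, Y i ω := by
    exact Finset.measurable_sum _ fun i _ => hmeas i
  have hint : Integrable (fun ω => Real.exp (c * X ω)) ℙ := by
    refine Integrable.mono' (integrable_const (Real.exp (c * M))) ?_ ?_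
    · exact (((measurable_const.sub hSmeas).const_mul c).exp).aestronglyMeasurable
    · filter_upwards with ω
      rw [Real.norm_eq_abs, abs_of_pos (Real.exp_pos _)]
      apply Real.exp_le_exp.2
      have h1 := hS_nn ω
      have : X ω ≤ M := by simp [hX]; linarith
      nlinarith [hcpos.le]
  have hchern := measure_ge_le_exp_mul_mgf (X := X) (μ := ℙ) t hcpos.le hint
  have hmgfS : mgf (∑ i, Y i) ℙ (-c) = ∏ i, mgf (Y i) ℙ (-c) :=
    hind.mgf_sum hmeas Finset.univ
  have hmgfX : mgf X ℙ c = Real.exp (c * M) * ∏ i, mgf (Y i) ℙ (-c) := by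
    rw [← hmgfS]
    simp only [mgf]
    rw [← integral_const_mul]
    congr 1
    ext ω
    rw [← Real.exp_add]
    congr 1
    simp [hX, Finset.sum_apply]
    ring
  have hmgf_i : ∀ i, mgf (Y i) ℙ (-c) ≤ Real.exp (-c * μi i + c ^ 2 * σi i / 2) := by
    intro i
    have hint1 : Integrable (Y i) ℙ := (hL2 i).integrable one_le_two
    have hint2 : Integrable (fun ω => Y i ω ^ 2) ℙ := (hL2 i).integrable_sq
    have hexp_int : Integrable (fun ω => Real.exp (-c * Y i ω)) ℙ := by
      refine Integrable.mono' (integrable_const 1) ?_ ?_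
      · exact (((hmeas i).const_mul (-c)).exp).aestronglyMeasurable
      · filter_upwards with ω
        rw [Real.norm_eq_abs, abs_of_pos (Real.exp_pos _)]
        rw [← Real.exp_zero]
        apply Real.exp_le_exp.2
        nlinarith [hnn i ω, hcpos.le]
    have step1 : mgf (Y i) ℙ (-c) ≤ ∫ ω, (1 - c * Y i ω + c ^ 2 * Y i ω ^ 2 / 2) ∂ℙ := by
      refine integral_mono hexp_int ?_ ?_
      · exact ((integrable_const 1).sub (hint1.const_mul c)).add
          ((hint2.const_mul (c ^ 2)).div_const 2)
      · intro ω
        have h := exp_neg_le_quad (x := c * Y i ω) (mul_nonneg hcpos.le (hnn i ω))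
        calc Real.exp (-c * Y i ω) = Real.exp (-(c * Y i ω)) := by ring_nf
          _ ≤ 1 - c * Y i ω + (c * Y i ω) ^ 2 / 2 := h
          _ = 1 - c * Y i ω + c ^ 2 * Y i ω ^ 2 / 2 := by ring
    have step2 : (∫ ω, (1 - c * Y i ω + c ^ 2 * Y i ω ^ 2 / 2) ∂ℙ)
        = 1 - c * μi i + c ^ 2 * σi i / 2 := by
      have e1 : (∫ ω, (1 - c * Y i ω + c ^ 2 * Y i ω ^ 2 / 2) ∂ℙ)
          = (∫ ω, (1 - c * Y i ω) ∂ℙ) + ∫ ω, c ^ 2 * Y i ω ^ 2 / 2 ∂ℙ :=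
        integral_add ((integrable_const 1).sub (hint1.const_mul c))
          ((hint2.const_mul (c ^ 2)).div_const 2)
      have e2 : (∫ ω, (1 - c * Y i ω) ∂ℙ) = (∫ _ω, (1:ℝ) ∂ℙ) - ∫ ω, c * Y i ω ∂ℙ :=
        integral_sub (integrable_const 1) (hint1.const_mul c)
      have e3 : (∫ ω, c ^ 2 * Y i ω ^ 2 / 2 ∂ℙ) = c ^ 2 * σi i / 2 := by
        rw [integral_div, integral_const_mul]
      have e4 : (∫ ω, c * Y i ω ∂ℙ) = c * μi i := integral_const_mul c _
      rw [e1, e2, e3, e4, integral_const]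
      simp
    have step3 := Real.add_one_le_exp (-c * μi i + c ^ 2 * σi i / 2)
    rw [step2] at step1
    linarith
  have hprod : (∏ i, mgf (Y i) ℙ (-c))
      ≤ Real.exp (∑ i, (-c * μi i + c ^ 2 * σi i / 2)) := by
    rw [Real.exp_sum]
    exact Finset.prod_le_prod (fun i _ => mgf_nonneg) fun i _ => hmgf_i i
  calc (ℙ {ω | t ≤ M - ∑ i, Y i ω}).toReal
      ≤ Real.exp (-c * t) * mgf X ℙ c := hchern
    _ ≤ Real.exp (-c * t) * (Real.exp (c * M) *
        Real.exp (∑ i, (-c * μi i + c ^ 2 * σi i / 2))) := by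
        rw [hmgfX]
        exact mul_le_mul_of_nonneg_left
          (mul_le_mul_of_nonneg_left hprod (Real.exp_pos _).le) (Real.exp_pos _).le
    _ = Real.exp (-c * t + (c * M + ∑ i, (-c * μi i + c ^ 2 * σi i / 2))) := by
        rw [← Real.exp_add, ← Real.exp_add]
    _ = Real.exp (-t ^ 2 / (2 * V)) := by
        congr 1
        rw [Finset.sum_add_distrib]

        simp only [← Finset.mul_sum, Finset.sum_div]
        rw [show (∑ i, c ^ 2 * σi i / 2) = c ^ 2 * V / 2 by
          rw [← Finset.sum_div, ← Finset.mul_sum]]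
        rw [hc, hM]
        field_simp
        ring
end

section
/- Let Z = f(X_1,...,X_m) where X_1,...,X_m are independent random variables, and for each i let Z'_i = f(X_1,...,X'_i,...,X_m) where X'_i is an independent copy of X_i. Then Var[Z] ≤ (1/2)·sum_{i=1}^m E[(Z - Z'_i)^2]. -/
open MeasureTheory ProbabilityTheory Function Set

namespace EfronSteinAux

set_option linter.unusedSectionVars false

variable {m : ℕ} {E : Fin m → Type*} [∀ i, MeasurableSpace (E i)]

/-- Combine two points: coordinates `< k` from `x`, coordinates `≥ k` from `z`. -/
def mix (k : ℕ) (x z : ∀ i, E i) : ∀ i, E i := fun j => if (j : ℕ) < k then x j else z j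

lemma measurable_mix (k : ℕ) :
    Measurable (fun p : (∀ i, E i) × (∀ i, E i) => mix k p.1 p.2) := by
  apply measurable_pi_lambda
  intro j
  by_cases h : (j : ℕ) < k
  · simp only [mix, h, ↓reduceIte]; exact (measurable_pi_apply j).comp measurable_fst
  · simp only [mix, h, ↓reduceIte]; exact (measurable_pi_apply j).comp measurable_snd

lemma mix_zero (x z : ∀ i, E i) : mix 0 x z = z := by
  funext j; simp [mix]

lemma mix_top (x z : ∀ i, E i) : mix m x z = x := by
  funext j; simp [mix, j.isLt]

lemma mix_succ_eq_update (i : Fin m) (x z : ∀ i, E i) :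
    mix (i : ℕ) x z = Function.update (mix ((i : ℕ) + 1) x z) i (z i) := by
  funext j
  by_cases hj : j = i
  · subst hj
    rw [Function.update_self]
    simp [mix]
  · rw [Function.update_of_ne hj]
    have hj' : (j : ℕ) ≠ (i : ℕ) := fun h => hj (Fin.ext h)
    by_cases h : (j : ℕ) < (i : ℕ)
    · simp [mix, h, Nat.lt_succ_of_lt h]
    · have h2 : ¬ (j : ℕ) < (i : ℕ) + 1 := by omega
      simp [mix, h, h2]

lemma mix_swap_succ (i : Fin m) (x z : ∀ i, E i) :
    mix ((i : ℕ) + 1) (Function.update x i (z i)) (Function.update z i (x i)) =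
      mix (i : ℕ) x z := by
  funext j
  by_cases hj : j = i
  · subst hj
    simp [mix, Nat.lt_succ_self]
  · have hj' : (j : ℕ) ≠ (i : ℕ) := fun h => hj (Fin.ext h)
    rw [show (mix ((i:ℕ)+1) (Function.update x i (z i)) (Function.update z i (x i))) j
        = if (j:ℕ) < (i:ℕ)+1 then (Function.update x i (z i)) j else (Function.update z i (x i)) j
        from rfl]
    rw [Function.update_of_ne hj, Function.update_of_ne hj]
    by_cases h : (j : ℕ) < (i : ℕ)
    · have h1 : (j : ℕ) < (i : ℕ) + 1 := by omega
      simp [mix, h, h1]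
    · have h2 : ¬ (j : ℕ) < (i : ℕ) + 1 := by omega
      simp [mix, h, h2]

lemma mix_swap (i : Fin m) (x z : ∀ i, E i) :
    mix (i : ℕ) (Function.update x i (z i)) (Function.update z i (x i)) =
      mix ((i : ℕ) + 1) x z := by
  funext j
  by_cases hj : j = i
  · subst hj
    simp [mix, Nat.lt_succ_self, lt_irrefl]
  · have hj' : (j : ℕ) ≠ (i : ℕ) := fun h => hj (Fin.ext h)
    rw [show (mix (i:ℕ) (Function.update x i (z i)) (Function.update z i (x i))) j
        = if (j:ℕ) < (i:ℕ) then (Function.update x i (z i)) j else (Function.update z i (x i)) j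
        from rfl]
    rw [Function.update_of_ne hj, Function.update_of_ne hj]
    by_cases h : (j : ℕ) < (i : ℕ)
    · have h1 : (j : ℕ) < (i : ℕ) + 1 := by omega
      simp [mix, h, h1]
    · have h2 : ¬ (j : ℕ) < (i : ℕ) + 1 := by omega
      simp [mix, h, h2]

section MP

variable (ν : ∀ i, Measure (E i)) [∀ i, IsProbabilityMeasure (ν i)]

lemma mp_fst' {α : Type*} [MeasurableSpace α] (ρ : Measure α) [IsProbabilityMeasure ρ]
    {β : Type*} [MeasurableSpace β] (κ : Measure β) [IsProbabilityMeasure κ] [SFinite κ] :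
    MeasurePreserving (Prod.fst : α × β → α) (ρ.prod κ) ρ := by
  refine ⟨measurable_fst, ?_⟩
  simp [Measure.map_fst_prod]

/-- Integral form of a measure preserving map. -/
lemma mp_integral {α β : Type*} [MeasurableSpace α] [MeasurableSpace β]
    {T : α → β} {ρ : Measure α} {κ : Measure β} (hT : MeasurePreserving T ρ κ)
    {g : β → ℝ} (hg : AEStronglyMeasurable g κ) :
    ∫ x, g (T x) ∂ρ = ∫ y, g y ∂κ := by
  rw [← hT.map_eq] at hg
  rw [← integral_map hT.measurable.aemeasurable hg, hT.map_eq]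

lemma mp_mix (k : ℕ) :
    MeasurePreserving (fun p : (∀ i, E i) × (∀ i, E i) => mix k p.1 p.2)
      ((Measure.pi ν).prod (Measure.pi ν)) (Measure.pi ν) := by
  refine ⟨measurable_mix k, ?_⟩
  refine (Measure.pi_eq fun s hs => ?_).symm
  rw [Measure.map_apply (measurable_mix k) (MeasurableSet.univ_pi hs)]
  have hpre : (fun p : (∀ i, E i) × (∀ i, E i) => mix k p.1 p.2) ⁻¹' Set.pi Set.univ s
      = (Set.pi Set.univ fun j : Fin m => if (j : ℕ) < k then s j else Set.univ) ×ˢ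
        (Set.pi Set.univ fun j : Fin m => if (j : ℕ) < k then Set.univ else s j) := by
    ext p
    simp only [Set.mem_preimage, Set.mem_pi, Set.mem_univ, true_implies, Set.mem_prod]
    constructor
    · intro h
      refine ⟨fun j => ?_, fun j => ?_⟩
      · by_cases hj : (j : ℕ) < k
        · rw [if_pos hj]; have := h j; simpa [mix, hj] using this
        · rw [if_neg hj]; trivial
      · by_cases hj : (j : ℕ) < k
        · rw [if_pos hj]; trivial
        · rw [if_neg hj]; have := h j; simpa [mix, hj] using this
    · rintro ⟨h1, h2⟩ j
      by_cases hj : (j : ℕ) < k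
      · have := h1 j; rw [if_pos hj] at this; simpa [mix, hj] using this
      · have := h2 j; rw [if_neg hj] at this; simpa [mix, hj] using this
  rw [hpre, Measure.prod_prod, Measure.pi_pi, Measure.pi_pi, ← Finset.prod_mul_distrib]
  refine Finset.prod_congr rfl fun j _ => ?_
  by_cases hj : (j : ℕ) < k <;> simp [hj]

lemma measurable_updater (i : Fin m) :
    Measurable (fun p : ((∀ j, E j) × (∀ j, E j)) => Function.update p.1 i (p.2 i)) :=
  measurable_update'.comp (measurable_fst.prodMk ((measurable_pi_apply i).comp measurable_snd))

lemma mp_update (i : Fin m) :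
    MeasurePreserving (fun q : (∀ j, E j) × E i => Function.update q.1 i q.2)
      ((Measure.pi ν).prod (ν i)) (Measure.pi ν) := by
  refine ⟨measurable_update', ?_⟩
  refine (Measure.pi_eq fun s hs => ?_).symm
  rw [Measure.map_apply measurable_update' (MeasurableSet.univ_pi hs)]
  have hpre : (fun q : (∀ j, E j) × E i => Function.update q.1 i q.2) ⁻¹' Set.pi Set.univ s
      = (Set.pi Set.univ (Function.update s i Set.univ)) ×ˢ (s i) := by
    ext q
    simp only [Set.mem_preimage, Set.mem_pi, Set.mem_univ, true_implies, Set.mem_prod]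
    constructor
    · intro h
      refine ⟨fun j => ?_, ?_⟩
      · by_cases hj : j = i
        · subst hj; rw [Function.update_self]; trivial
        · rw [Function.update_of_ne hj]
          have := h j; rwa [Function.update_of_ne hj] at this
      · have := h i; rwa [Function.update_self] at this
    · rintro ⟨h1, h2⟩ j
      by_cases hj : j = i
      · subst hj; rwa [Function.update_self]
      · rw [Function.update_of_ne hj]
        have := h1 j; rwa [Function.update_of_ne hj] at this
  rw [hpre, Measure.prod_prod, Measure.pi_pi]
  have : ∀ j, ν j (Function.update s i Set.univ j) * (if j = i then ν i (s i) else 1)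
      = ν j (s j) := by
    intro j
    by_cases hj : j = i
    · subst hj; simp [Function.update_self]
    · simp [Function.update_of_ne hj, hj]
  calc (∏ j, ν j (Function.update s i Set.univ j)) * ν i (s i)
      = ∏ j, (ν j (Function.update s i Set.univ j) * (if j = i then ν i (s i) else 1)) := by
        rw [Finset.prod_mul_distrib, Finset.prod_ite_eq' Finset.univ i (fun _ => ν i (s i))]
        simp
    _ = ∏ j, ν j (s j) := Finset.prod_congr rfl fun j _ => this j

lemma mp_eval (i : Fin m) :
    MeasurePreserving (fun x : ∀ j, E j => x i) (Measure.pi ν) (ν i) := by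
  refine ⟨measurable_pi_apply i, ?_⟩
  ext t ht
  rw [Measure.map_apply (measurable_pi_apply i) ht]
  have hpre : (fun x : ∀ j, E j => x i) ⁻¹' t
      = Set.pi Set.univ (Function.update (fun j => (Set.univ : Set (E j))) i t) := by
    ext x
    simp only [Set.mem_preimage, Set.mem_pi, Set.mem_univ, true_implies]
    constructor
    · intro h j
      by_cases hj : j = i
      · subst hj; rwa [Function.update_self]
      · rw [Function.update_of_ne hj]; trivial
    · intro h
      have := h i; rwa [Function.update_self] at this
  rw [hpre, Measure.pi_pi]
  have : ∀ j, ν j (Function.update (fun j => (Set.univ : Set (E j))) i t j)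
      = if j = i then ν i t else 1 := by
    intro j
    by_cases hj : j = i
    · subst hj; simp [Function.update_self]
    · simp [Function.update_of_ne hj, hj]
  rw [Finset.prod_congr rfl fun j _ => this j,
    Finset.prod_ite_eq' Finset.univ i (fun _ => ν i t)]
  simp

/-- The swap of the `i`-th coordinates of two independent samples is measure preserving. -/
lemma mp_swap (i : Fin m) :
    MeasurePreserving (fun p : (∀ j, E j) × (∀ j, E j) =>
        (Function.update p.1 i (p.2 i), Function.update p.2 i (p.1 i)))
      ((Measure.pi ν).prod (Measure.pi ν)) ((Measure.pi ν).prod (Measure.pi ν)) := by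
  have hmeas : Measurable (fun p : (∀ j, E j) × (∀ j, E j) =>
      (Function.update p.1 i (p.2 i), Function.update p.2 i (p.1 i))) := by
    refine Measurable.prodMk (measurable_updater i) ?_
    exact measurable_update'.comp (measurable_snd.prodMk ((measurable_pi_apply i).comp measurable_fst))
  refine ⟨hmeas, ?_⟩
  refine (Measure.prod_eq_generateFrom generateFrom_pi generateFrom_pi isPiSystem_pi isPiSystem_pi
    (Measure.FiniteSpanningSetsIn.pi fun j => (ν j).toFiniteSpanningSetsIn)
    (Measure.FiniteSpanningSetsIn.pi fun j => (ν j).toFiniteSpanningSetsIn) ?_).symm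
  rintro _ ⟨s, hs, rfl⟩ _ ⟨t, ht, rfl⟩
  simp only [Set.mem_pi, Set.mem_univ, true_implies, Set.mem_setOf_eq] at hs ht
  rw [Measure.map_apply hmeas ((MeasurableSet.univ_pi hs).prod (MeasurableSet.univ_pi ht))]
  have hpre : (fun p : (∀ j, E j) × (∀ j, E j) =>
        (Function.update p.1 i (p.2 i), Function.update p.2 i (p.1 i))) ⁻¹'
        ((Set.pi Set.univ s) ×ˢ (Set.pi Set.univ t))
      = (Set.pi Set.univ (Function.update s i (t i))) ×ˢ
        (Set.pi Set.univ (Function.update t i (s i))) := by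
    ext p
    simp only [Set.mem_preimage, Set.mem_prod, Set.mem_pi, Set.mem_univ, true_implies]
    constructor
    · rintro ⟨h1, h2⟩
      refine ⟨fun j => ?_, fun j => ?_⟩
      · by_cases hj : j = i
        · subst hj; rw [Function.update_self]
          have := h2 j; rwa [Function.update_self] at this
        · rw [Function.update_of_ne hj]
          have := h1 j; rwa [Function.update_of_ne hj] at this
      · by_cases hj : j = i
        · subst hj; rw [Function.update_self]
          have := h1 j; rwa [Function.update_self] at this
        · rw [Function.update_of_ne hj]
          have := h2 j; rwa [Function.update_of_ne hj] at this
    · rintro ⟨h1, h2⟩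
      refine ⟨fun j => ?_, fun j => ?_⟩
      · by_cases hj : j = i
        · subst hj; rw [Function.update_self]
          have := h2 j; rwa [Function.update_self] at this
        · rw [Function.update_of_ne hj]
          have := h1 j; rwa [Function.update_of_ne hj] at this
      · by_cases hj : j = i
        · subst hj; rw [Function.update_self]
          have := h1 j; rwa [Function.update_self] at this
        · rw [Function.update_of_ne hj]
          have := h2 j; rwa [Function.update_of_ne hj] at this
  rw [hpre, Measure.prod_prod, Measure.pi_pi, Measure.pi_pi, Measure.pi_pi, Measure.pi_pi,
    ← Finset.prod_mul_distrib, ← Finset.prod_mul_distrib]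
  refine Finset.prod_congr rfl fun j _ => ?_
  by_cases hj : j = i
  · subst hj; rw [Function.update_self, Function.update_self, mul_comm]
  · rw [Function.update_of_ne hj, Function.update_of_ne hj]

/-- The pair (resampled point, old `i`-th coordinate) is distributed as `μ ⊗ ν i`. -/
lemma mp_pairX (i : Fin m) :
    MeasurePreserving (fun p : (∀ j, E j) × (∀ j, E j) =>
        (mix ((i : ℕ) + 1) p.1 p.2, p.2 i))
      ((Measure.pi ν).prod (Measure.pi ν)) ((Measure.pi ν).prod (ν i)) := by
  have hmeas : Measurable (fun p : (∀ j, E j) × (∀ j, E j) =>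
      (mix ((i : ℕ) + 1) p.1 p.2, p.2 i)) :=
    (measurable_mix _).prodMk ((measurable_pi_apply i).comp measurable_snd)
  refine ⟨hmeas, ?_⟩
  refine (Measure.prod_eq_generateFrom generateFrom_pi MeasurableSpace.generateFrom_measurableSet
    isPiSystem_pi MeasurableSpace.isPiSystem_measurableSet
    (Measure.FiniteSpanningSetsIn.pi fun j => (ν j).toFiniteSpanningSetsIn)
    (ν i).toFiniteSpanningSetsIn ?_).symm
  rintro _ ⟨s, hs, rfl⟩ t ht
  simp only [Set.mem_pi, Set.mem_univ, true_implies, Set.mem_setOf_eq] at hs ht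
  rw [Measure.map_apply hmeas ((MeasurableSet.univ_pi hs).prod ht)]
  have hpre : (fun p : (∀ j, E j) × (∀ j, E j) => (mix ((i : ℕ) + 1) p.1 p.2, p.2 i)) ⁻¹'
        ((Set.pi Set.univ s) ×ˢ t)
      = (Set.pi Set.univ (fun j : Fin m => if (j : ℕ) < (i : ℕ) + 1 then s j else Set.univ)) ×ˢ
        (Set.pi Set.univ (Function.update
          (fun j : Fin m => if (j : ℕ) < (i : ℕ) + 1 then Set.univ else s j) i t)) := by
    ext p
    simp only [Set.mem_preimage, Set.mem_prod, Set.mem_pi, Set.mem_univ, true_implies]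
    constructor
    · rintro ⟨h1, h2⟩
      refine ⟨fun j => ?_, fun j => ?_⟩
      · by_cases hj : (j : ℕ) < (i : ℕ) + 1
        · rw [if_pos hj]; have := h1 j; simpa [mix, hj] using this
        · rw [if_neg hj]; trivial
      · by_cases hj : j = i
        · subst hj; rwa [Function.update_self]
        · rw [Function.update_of_ne hj]
          by_cases hj2 : (j : ℕ) < (i : ℕ) + 1
          · rw [if_pos hj2]; trivial
          · rw [if_neg hj2]; have := h1 j; simpa [mix, hj2] using this
    · rintro ⟨h1, h2⟩
      constructor
      · intro j
        by_cases hj : (j : ℕ) < (i : ℕ) + 1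
        · have := h1 j; rw [if_pos hj] at this; simpa [mix, hj] using this
        · have hji : j ≠ i := by
            intro hji; subst hji; exact hj (Nat.lt_succ_self _)
          have := h2 j; rw [Function.update_of_ne hji, if_neg hj] at this
          simpa [mix, hj] using this
      · have := h2 i; rwa [Function.update_self] at this
  rw [hpre, Measure.prod_prod, Measure.pi_pi, Measure.pi_pi, Measure.pi_pi]
  have key : ∀ j : Fin m,
      (ν j (if (j : ℕ) < (i : ℕ) + 1 then s j else Set.univ)) *
        (ν j (Function.update
          (fun j : Fin m => if (j : ℕ) < (i : ℕ) + 1 then Set.univ else s j) i t j))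
      = ν j (s j) * (if j = i then ν i t else 1) := by
    intro j
    by_cases hj : j = i
    · subst hj
      rw [Function.update_self, if_pos (Nat.lt_succ_self _), if_pos rfl]
    · rw [Function.update_of_ne hj, if_neg hj]
      by_cases hj2 : (j : ℕ) < (i : ℕ) + 1
      · rw [if_pos hj2, if_pos hj2]; simp
      · rw [if_neg hj2, if_neg hj2]; simp [mul_comm]
  rw [← Finset.prod_mul_distrib, Finset.prod_congr rfl fun j _ => key j,
    Finset.prod_mul_distrib, Finset.prod_ite_eq' Finset.univ i (fun _ => ν i t)]
  simp

/-- The pair (old point, fresh `i`-th coordinate) is distributed as `μ ⊗ ν i`. -/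
lemma mp_pairY (i : Fin m) :
    MeasurePreserving (fun p : (∀ j, E j) × (∀ j, E j) => (p.1, p.2 i))
      ((Measure.pi ν).prod (Measure.pi ν)) ((Measure.pi ν).prod (ν i)) := by
  have h := (MeasurePreserving.id (Measure.pi ν)).prod (mp_eval ν i)
  exact h

lemma l2_mul_integrable {α : Type*} [MeasurableSpace α] {ρ : Measure α}
    {a b : α → ℝ} (ha : MemLp a 2 ρ) (hb : MemLp b 2 ρ) :
    Integrable (fun x => a x * b x) ρ := by
  have h : (fun x => a x * b x)
      = fun x => (((a x + b x) ^ 2 - a x ^ 2) - b x ^ 2) / 2 := by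
    funext x; ring
  rw [h]
  exact (((ha.add hb).integrable_sq.sub ha.integrable_sq).sub hb.integrable_sq).div_const 2

variable {f : (∀ i, E i) → ℝ}

lemma step (hf : Measurable f) (hf2 : MemLp f 2 (Measure.pi ν)) (i : Fin m) :
    (∫ p, f p.1 * f (mix ((i : ℕ) + 1) p.1 p.2) ∂((Measure.pi ν).prod (Measure.pi ν)))
      - (∫ p, f p.1 * f (mix (i : ℕ) p.1 p.2) ∂((Measure.pi ν).prod (Measure.pi ν)))
    ≤ (1 / 2) * ∫ q, (f q.1 - f (Function.update q.1 i q.2)) ^ 2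
        ∂((Measure.pi ν).prod (ν i)) := by
  -- ℒ² membership of the various composed functions
  have hg1 : MemLp (fun p : (∀ j, E j) × (∀ j, E j) => f p.1) 2
      ((Measure.pi ν).prod (Measure.pi ν)) :=
    hf2.comp_measurePreserving (mp_fst' (Measure.pi ν) (Measure.pi ν))
  have hgX : MemLp (fun p : (∀ j, E j) × (∀ j, E j) => f (mix ((i : ℕ) + 1) p.1 p.2)) 2
      ((Measure.pi ν).prod (Measure.pi ν)) :=
    hf2.comp_measurePreserving (mp_mix ν ((i : ℕ) + 1))
  have hgY : MemLp (fun p : (∀ j, E j) × (∀ j, E j) => f (mix (i : ℕ) p.1 p.2)) 2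
      ((Measure.pi ν).prod (Measure.pi ν)) :=
    hf2.comp_measurePreserving (mp_mix ν (i : ℕ))
  have hu : MemLp (fun q : (∀ j, E j) × E i => f (Function.update q.1 i q.2)) 2
      ((Measure.pi ν).prod (ν i)) :=
    hf2.comp_measurePreserving (mp_update ν i)
  have hq1 : MemLp (fun q : (∀ j, E j) × E i => f q.1) 2 ((Measure.pi ν).prod (ν i)) :=
    hf2.comp_measurePreserving (mp_fst' (Measure.pi ν) (ν i))
  have hg2 : MemLp (fun p : (∀ j, E j) × (∀ j, E j) => f (Function.update p.1 i (p.2 i))) 2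
      ((Measure.pi ν).prod (Measure.pi ν)) :=
    hu.comp_measurePreserving (mp_pairY ν i)
  have hd1 : MemLp (fun p : (∀ j, E j) × (∀ j, E j) =>
      f p.1 - f (Function.update p.1 i (p.2 i))) 2 ((Measure.pi ν).prod (Measure.pi ν)) :=
    hg1.sub hg2
  have hd2 : MemLp (fun p : (∀ j, E j) × (∀ j, E j) =>
      f (mix ((i : ℕ) + 1) p.1 p.2) - f (mix (i : ℕ) p.1 p.2)) 2
      ((Measure.pi ν).prod (Measure.pi ν)) := hgX.sub hgY
  have hd2' : MemLp (fun p : (∀ j, E j) × (∀ j, E j) =>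
      f (mix (i : ℕ) p.1 p.2) - f (mix ((i : ℕ) + 1) p.1 p.2)) 2
      ((Measure.pi ν).prod (Measure.pi ν)) := hgY.sub hgX
  have hΦmeas : Measurable (fun q : (∀ j, E j) × E i =>
      (f q.1 - f (Function.update q.1 i q.2)) ^ 2) :=
    ((hf.comp measurable_fst).sub (hf.comp measurable_update')).pow_const 2
  -- the Efron–Stein quantity for coordinate i, as a product integral
  set D : ℝ := ∫ q, (f q.1 - f (Function.update q.1 i q.2)) ^ 2 ∂((Measure.pi ν).prod (ν i))
    with hDdef
  -- the two squared differences on the big product space both integrate to D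
  have key1 : ∫ p, (f p.1 - f (Function.update p.1 i (p.2 i))) ^ 2
      ∂((Measure.pi ν).prod (Measure.pi ν)) = D :=
    mp_integral (mp_pairY ν i) hΦmeas.aestronglyMeasurable
  have key2 : ∫ p, (f (mix ((i : ℕ) + 1) p.1 p.2)
        - f (Function.update (mix ((i : ℕ) + 1) p.1 p.2) i (p.2 i))) ^ 2
      ∂((Measure.pi ν).prod (Measure.pi ν)) = D :=
    mp_integral (mp_pairX ν i) hΦmeas.aestronglyMeasurable
  -- the central quantity
  set A : ℝ := ∫ p, f p.1 * (f (mix ((i : ℕ) + 1) p.1 p.2) - f (mix (i : ℕ) p.1 p.2))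
      ∂((Measure.pi ν).prod (Measure.pi ν)) with hAdef
  have hA : (∫ p, f p.1 * f (mix ((i : ℕ) + 1) p.1 p.2) ∂((Measure.pi ν).prod (Measure.pi ν)))
      - (∫ p, f p.1 * f (mix (i : ℕ) p.1 p.2) ∂((Measure.pi ν).prod (Measure.pi ν))) = A := by
    rw [hAdef, ← integral_sub (l2_mul_integrable hg1 hgX) (l2_mul_integrable hg1 hgY)]
    congr 1
    funext p
    ring
  -- swap invariance
  have hswap : A = ∫ p, f (Function.update p.1 i (p.2 i)) *
      (f (mix (i : ℕ) p.1 p.2) - f (mix ((i : ℕ) + 1) p.1 p.2))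
      ∂((Measure.pi ν).prod (Measure.pi ν)) := by
    have hHmeas : AEStronglyMeasurable
        (fun p : (∀ j, E j) × (∀ j, E j) =>
          f p.1 * (f (mix ((i : ℕ) + 1) p.1 p.2) - f (mix (i : ℕ) p.1 p.2)))
        ((Measure.pi ν).prod (Measure.pi ν)) :=
      ((hf.comp measurable_fst).mul
        ((hf.comp (measurable_mix _)).sub (hf.comp (measurable_mix _)))).aestronglyMeasurable
    have h := mp_integral (mp_swap ν i) hHmeas
    rw [hAdef, ← h]
    congr 1
    funext p
    simp only [mix_swap_succ, mix_swap]
  -- doubling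
  have h2A : 2 * A = ∫ p, (f p.1 - f (Function.update p.1 i (p.2 i))) *
      (f (mix ((i : ℕ) + 1) p.1 p.2) - f (mix (i : ℕ) p.1 p.2))
      ∂((Measure.pi ν).prod (Measure.pi ν)) := by
    have : 2 * A = A + A := by ring
    rw [this]
    nth_rewrite 2 [hswap]
    rw [← integral_add (l2_mul_integrable hg1 hd2)
      (l2_mul_integrable hg2 hd2')]
    congr 1
    funext p
    ring
  -- pointwise AM–GM and the two key identities
  have hbound : ∫ p, (f p.1 - f (Function.update p.1 i (p.2 i))) *
      (f (mix ((i : ℕ) + 1) p.1 p.2) - f (mix (i : ℕ) p.1 p.2))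
      ∂((Measure.pi ν).prod (Measure.pi ν))
      ≤ ∫ p, ((f p.1 - f (Function.update p.1 i (p.2 i))) ^ 2 / 2 +
          (f (mix ((i : ℕ) + 1) p.1 p.2) - f (mix (i : ℕ) p.1 p.2)) ^ 2 / 2)
      ∂((Measure.pi ν).prod (Measure.pi ν)) := by
    refine integral_mono (l2_mul_integrable hd1 hd2) ?_ ?_
    · exact ((hd1.integrable_sq).div_const 2).add ((hd2.integrable_sq).div_const 2)
    · intro p
      have := sq_nonneg ((f p.1 - f (Function.update p.1 i (p.2 i))) -
        (f (mix ((i : ℕ) + 1) p.1 p.2) - f (mix (i : ℕ) p.1 p.2)))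
      dsimp only
      nlinarith
  have hsplit : ∫ p, ((f p.1 - f (Function.update p.1 i (p.2 i))) ^ 2 / 2 +
          (f (mix ((i : ℕ) + 1) p.1 p.2) - f (mix (i : ℕ) p.1 p.2)) ^ 2 / 2)
      ∂((Measure.pi ν).prod (Measure.pi ν)) = D := by
    rw [integral_add ((hd1.integrable_sq).div_const 2) ((hd2.integrable_sq).div_const 2),
      integral_div, integral_div, key1]
    have : ∫ p, (f (mix ((i : ℕ) + 1) p.1 p.2) - f (mix (i : ℕ) p.1 p.2)) ^ 2
        ∂((Measure.pi ν).prod (Measure.pi ν)) = D := by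
      rw [← key2]
      congr 1
      funext p
      rw [mix_succ_eq_update]
    rw [this]
    ring
  rw [hA]
  linarith [hbound, h2A, hsplit.le, hsplit.ge]

end MP

end EfronSteinAux

open EfronSteinAux

/-- **Efron–Stein inequality.** For a function `f` of `m` independent
random variables (realized canonically on a product probability space),
`Var[Z] ≤ (1/2) ∑ᵢ E[(Z - Z'ᵢ)²]`, where `Z'ᵢ` is obtained by resampling the `i`-th
coordinate independently. -/
theorem efron_stein {m : ℕ} {E : Fin m → Type*} [∀ i, MeasurableSpace (E i)]
    (ν : ∀ i, Measure (E i)) [∀ i, IsProbabilityMeasure (ν i)]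
    (f : (∀ i, E i) → ℝ) (hf : Measurable f) (hf2 : MemLp f 2 (Measure.pi ν)) :
    variance f (Measure.pi ν) ≤
      (1 / 2) * ∑ i, ∫ x, ∫ y, (f x - f (Function.update x i y)) ^ 2
        ∂(ν i) ∂(Measure.pi ν) := by
  classical
  -- endpoint values of the telescoping martingale-type family
  have hJm : (∫ p, f p.1 * f (mix m p.1 p.2) ∂((Measure.pi ν).prod (Measure.pi ν)))
      = ∫ x, f x ^ 2 ∂(Measure.pi ν) := by
    have h1 : (∫ p, f p.1 * f (mix m p.1 p.2) ∂((Measure.pi ν).prod (Measure.pi ν)))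
        = ∫ p, (fun x => f x ^ 2) p.1 ∂((Measure.pi ν).prod (Measure.pi ν)) := by
      simp only [mix_top, ← pow_two]
    rw [h1]
    exact mp_integral (mp_fst' (Measure.pi ν) (Measure.pi ν))
      ((hf.pow_const 2).aestronglyMeasurable)
  have hJ0 : (∫ p, f p.1 * f (mix 0 p.1 p.2) ∂((Measure.pi ν).prod (Measure.pi ν)))
      = (∫ x, f x ∂(Measure.pi ν)) ^ 2 := by
    have h1 : (∫ p, f p.1 * f (mix 0 p.1 p.2) ∂((Measure.pi ν).prod (Measure.pi ν)))
        = ∫ p, f p.1 * f p.2 ∂((Measure.pi ν).prod (Measure.pi ν)) := by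
      simp only [mix_zero]
    rw [h1, integral_prod_mul f f, sq]
  -- telescoping
  have tele : (∫ p, f p.1 * f (mix m p.1 p.2) ∂((Measure.pi ν).prod (Measure.pi ν)))
      - (∫ p, f p.1 * f (mix 0 p.1 p.2) ∂((Measure.pi ν).prod (Measure.pi ν)))
      = ∑ k ∈ Finset.range m,
        ((∫ p, f p.1 * f (mix (k + 1) p.1 p.2) ∂((Measure.pi ν).prod (Measure.pi ν)))
          - (∫ p, f p.1 * f (mix k p.1 p.2) ∂((Measure.pi ν).prod (Measure.pi ν)))) :=
    (Finset.sum_range_sub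
      (fun k => ∫ p, f p.1 * f (mix k p.1 p.2) ∂((Measure.pi ν).prod (Measure.pi ν))) m).symm
  -- product integral = iterated integral for the Efron–Stein terms
  have hiter : ∀ i : Fin m,
      (∫ q, (f q.1 - f (Function.update q.1 i q.2)) ^ 2 ∂((Measure.pi ν).prod (ν i)))
        = ∫ x, ∫ y, (f x - f (Function.update x i y)) ^ 2 ∂(ν i) ∂(Measure.pi ν) := by
    intro i
    have hq1 : MemLp (fun q : (∀ j, E j) × E i => f q.1) 2 ((Measure.pi ν).prod (ν i)) :=
      hf2.comp_measurePreserving (mp_fst' (Measure.pi ν) (ν i))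
    have hu : MemLp (fun q : (∀ j, E j) × E i => f (Function.update q.1 i q.2)) 2
        ((Measure.pi ν).prod (ν i)) := hf2.comp_measurePreserving (mp_update ν i)
    have hd : MemLp (fun q : (∀ j, E j) × E i => f q.1 - f (Function.update q.1 i q.2)) 2
        ((Measure.pi ν).prod (ν i)) := hq1.sub hu
    exact MeasureTheory.integral_prod _ hd.integrable_sq
  -- per-coordinate bound in iterated form
  have key : ∀ i : Fin m,
      (∫ p, f p.1 * f (mix ((i : ℕ) + 1) p.1 p.2) ∂((Measure.pi ν).prod (Measure.pi ν)))
        - (∫ p, f p.1 * f (mix (i : ℕ) p.1 p.2) ∂((Measure.pi ν).prod (Measure.pi ν)))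
      ≤ 1 / 2 * ∫ x, ∫ y, (f x - f (Function.update x i y)) ^ 2 ∂(ν i) ∂(Measure.pi ν) := by
    intro i
    have h := step ν hf hf2 i
    rwa [hiter i] at h
  set T : ℕ → ℝ := fun k =>
    if h : k < m then
      ∫ x, ∫ y, (f x - f (Function.update x (⟨k, h⟩ : Fin m) y)) ^ 2
        ∂(ν (⟨k, h⟩ : Fin m)) ∂(Measure.pi ν)
    else 0 with hT
  have hsum : ∑ k ∈ Finset.range m,
      ((∫ p, f p.1 * f (mix (k + 1) p.1 p.2) ∂((Measure.pi ν).prod (Measure.pi ν)))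
        - (∫ p, f p.1 * f (mix k p.1 p.2) ∂((Measure.pi ν).prod (Measure.pi ν))))
      ≤ ∑ k ∈ Finset.range m, 1 / 2 * T k := by
    refine Finset.sum_le_sum fun k hk => ?_
    have hkm := Finset.mem_range.mp hk
    have h := key ⟨k, hkm⟩
    simp only [hT, dif_pos hkm]
    exact h
  have hms : ∑ k ∈ Finset.range m, 1 / 2 * T k = 1 / 2 * ∑ k ∈ Finset.range m, T k :=
    (Finset.mul_sum _ _ _).symm
  have hTsum : ∑ k ∈ Finset.range m, T k
      = ∑ i : Fin m, ∫ x, ∫ y, (f x - f (Function.update x i y)) ^ 2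
          ∂(ν i) ∂(Measure.pi ν) := by
    rw [← Fin.sum_univ_eq_sum_range T m]
    refine Finset.sum_congr rfl fun i _ => ?_
    simp only [hT, dif_pos i.isLt, Fin.eta]
  rw [variance_eq_sub hf2]
  simp only [Pi.pow_apply]
  linarith [tele, hsum, hms, hTsum, hJm, hJ0]
end
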